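/- For every sequence ω ∈ (D_b^m)^{ℕ₀} and every k ∈ ℕ, the cardinalities of the sets Σ_k^ω satisfy (b−1)·|Σ_k^ω| ≤ |Σ_{k+1}^ω| ≤ b·|Σ_k^ω|. -/

import Mathlib

open MeasureTheory Filter

namespace Paper


/-- The set `Σ_k^ω` of admissible words of length `k`. -/
def SigmaSet (b m : ℕ) (ω : ℕ → Fin m → Fin b) (k : ℕ) : Set (Fin k → Fin b) :=
  { d | ∀ (i : ℕ) (hi : i + m ≤ k),
      (fun j : Fin m => d ⟨i + j.1, by have := j.isLt; omega⟩) ≠ ω i }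

/-- The survivor set `K^ω ⊆ [0,1]`. -/
def Kset (b m : ℕ) (ω : ℕ → Fin m → Fin b) : Set ℝ :=
  { x | ∃ d : ℕ → Fin b,
      (∀ k : ℕ, (fun j : Fin m => d (k + j.1)) ≠ ω k) ∧
      x = ∑' i : ℕ, ((d i : ℕ) : ℝ) / (b : ℝ) ^ (i + 1) }

open Classical in
/-- The adjacency matrix `A_d` of the subshift of finite type with forbidden word `d`. -/
noncomputable def adjMat (b m : ℕ) (d : Fin m → Fin b) :
    Matrix (Fin (m - 1) → Fin b) (Fin (m - 1) → Fin b) ℝ :=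
  fun u v =>
    if ((∀ (i : ℕ) (h : i + 1 < m - 1), u ⟨i + 1, h⟩ = v ⟨i, by omega⟩) ∧
        ¬ ((∀ (j : ℕ) (h : j < m - 1), u ⟨j, h⟩ = d ⟨j, by omega⟩) ∧
           (∀ (h2 : m - 2 < m - 1), v ⟨m - 2, h2⟩ = d ⟨m - 1, by omega⟩)))
    then 1 else 0

/-- The norm `‖M‖ = ∑_{i,j} |m_{ij}|` of a real square matrix. -/
noncomputable def matNorm {n : Type*} [Fintype n] (M : Matrix n n ℝ) : ℝ :=
  ∑ i, ∑ j, |M i j|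

/-- The product `A_{ω^0} A_{ω^1} ⋯ A_{ω^{n-1}}`. -/
noncomputable def prodA (b m : ℕ) (ω : ℕ → Fin m → Fin b) (n : ℕ) :
    Matrix (Fin (m - 1) → Fin b) (Fin (m - 1) → Fin b) ℝ :=
  ((List.range n).map (fun i => adjMat b m (ω i))).prod

/-- `ω` is progressively overlapping at position `k`. -/
def ProgOverlapAt (b m : ℕ) (ω : ℕ → Fin m → Fin b) (k : ℕ) : Prop :=
  ∀ j : ℕ, 1 ≤ j → j ≤ min k (m - 1) →
    ∀ (t : ℕ) (h : t + j < m),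
      ω k ⟨t, by omega⟩ = ω (k - j) ⟨t + j, h⟩

/-- `ω` is totally distinct at position `k`. -/
def TotDistinctAt (b m : ℕ) (ω : ℕ → Fin m → Fin b) (k : ℕ) : Prop :=
  ∀ j : ℕ, 1 ≤ j → j ≤ min k (m - 1) →
    ¬ (∀ (t : ℕ) (h : t + j < m),
        ω k ⟨t, by omega⟩ = ω (k - j) ⟨t + j, h⟩)

/-- A set `F ⊆ ℝ` is `s`-Ahlfors regular. -/
def AhlforsRegular (F : Set ℝ) (s : ℝ) : Prop :=
  ∃ c : ℝ, 1 ≤ c ∧ ∀ x ∈ F, ∀ r : ℝ, 0 < r → r < 1 →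
    ENNReal.ofReal (c⁻¹ * r ^ s) ≤ Measure.hausdorffMeasure s (F ∩ Metric.closedBall x r) ∧
    Measure.hausdorffMeasure s (F ∩ Metric.closedBall x r) ≤ ENNReal.ofReal (c * r ^ s)


/-- **Lemma 2.1.** For every `ω` and `k ≥ 1`, `(b-1)|Σ_k^ω| ≤ |Σ_{k+1}^ω| ≤ b|Σ_k^ω|`. -/
theorem card_sigma_growth (b m : ℕ) (hb : 3 ≤ b) (hm : 2 ≤ m)
    (ω : ℕ → Fin m → Fin b) (k : ℕ) (hk : 1 ≤ k) :
    (b - 1) * Nat.card ↥(SigmaSet b m ω k) ≤ Nat.card ↥(SigmaSet b m ω (k + 1)) ∧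
    Nat.card ↥(SigmaSet b m ω (k + 1)) ≤ b * Nat.card ↥(SigmaSet b m ω k) := by
  classical
  set S := SigmaSet b m ω k with hS
  set T := SigmaSet b m ω (k+1) with hT
  have hScard : Nat.card ↥S = S.toFinset.card := by
    simp [Nat.card_coe_set_eq, Set.ncard_eq_toFinset_card']
  have hTcard : Nat.card ↥T = T.toFinset.card := by
    simp [Nat.card_coe_set_eq, Set.ncard_eq_toFinset_card']
  set f : (Fin (k+1) → Fin b) → (Fin k → Fin b) :=
    fun d i => d ⟨i.1, by omega⟩ with hf
  set ext : (Fin k → Fin b) → Fin b → (Fin (k+1) → Fin b) :=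
    fun e a i => if h : i.1 < k then e ⟨i.1, h⟩ else a with hext
  have mapsTo : ∀ d ∈ T.toFinset, f d ∈ S.toFinset := by
    intro d hd
    simp only [Set.mem_toFinset, hT, hS, SigmaSet, Set.mem_setOf_eq] at hd ⊢
    intro i hi hcon
    refine hd i (by omega) ?_
    funext j
    rw [← hcon]
  -- fiber equality
  have fiber_card : ∀ e ∈ S.toFinset,
      (T.toFinset.filter (fun d => f d = e)).card
        = (Finset.univ.filter (fun a : Fin b => ext e a ∈ T)).card := by
    intro e he
    apply Finset.card_nbij' (fun d => d ⟨k, by omega⟩) (fun a => ext e a)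
    · intro d hd
      simp only [Finset.mem_coe, Finset.mem_filter, Set.mem_toFinset] at hd
      obtain ⟨hdT, hde⟩ := hd
      have heq : ext e (d ⟨k, by omega⟩) = d := by
        funext i
        simp only [hext]
        split
        · next h =>
            rw [← hde]
        · next h =>
            have h2 := i.isLt
            exact congrArg d (Fin.ext (by simp only [Fin.val_mk]; omega))
      simp only [Finset.mem_coe, Finset.mem_filter, Finset.mem_univ, true_and, heq]
      exact hdT
    · intro a ha
      simp only [Finset.mem_coe, Finset.mem_filter, Finset.mem_univ, true_and] at ha
      simp only [Finset.mem_coe, Finset.mem_filter, Set.mem_toFinset]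
      refine ⟨ha, ?_⟩
      funext i
      simp only [hf, hext]
      rw [dif_pos i.isLt]
    · intro d hd
      simp only [Finset.mem_coe, Finset.mem_filter, Set.mem_toFinset] at hd
      obtain ⟨hdT, hde⟩ := hd
      funext i
      simp only [hext]
      split
      · next h =>
          rw [← hde]
      · next h =>
          have h2 := i.isLt
          exact congrArg d (Fin.ext (by simp only [Fin.val_mk]; omega))
    · intro a ha
      simp only [hext]
      rw [dif_neg (by omega)]
  -- characterize bad letters
  have bad_unique : ∀ e ∈ S.toFinset, ∀ a : Fin b, ext e a ∉ T →
      m ≤ k + 1 ∧ a = ω (k + 1 - m) ⟨m - 1, by omega⟩ := by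
    intro e he a hbad
    simp only [Set.mem_toFinset, hS, SigmaSet, Set.mem_setOf_eq] at he
    simp only [hT, SigmaSet, Set.mem_setOf_eq, not_forall, not_not] at hbad
    obtain ⟨i, hi, heq⟩ := hbad
    have him : i + m = k + 1 := by
      by_contra hne
      have hik : i + m ≤ k := by omega
      refine he i hik ?_
      funext j
      have := congrFun heq j
      simp only [hext] at this
      rw [dif_pos (by have := j.isLt; omega)] at this
      rw [← this]
    refine ⟨by omega, ?_⟩
    have hi' : i = k + 1 - m := by omega
    subst hi'
    have := congrFun heq ⟨m - 1, by omega⟩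
    simp only [hext] at this
    rw [dif_neg (by omega)] at this
    exact this
  -- fiber bounds
  have fiber_le : ∀ e ∈ S.toFinset,
      (T.toFinset.filter (fun d => f d = e)).card ≤ b := by
    intro e he
    rw [fiber_card e he]
    calc (Finset.univ.filter (fun a : Fin b => ext e a ∈ T)).card
        ≤ Finset.univ.card := Finset.card_filter_le _ _
      _ = b := by simp
  have fiber_ge : ∀ e ∈ S.toFinset,
      b - 1 ≤ (T.toFinset.filter (fun d => f d = e)).card := by
    intro e he
    rw [fiber_card e he]
    have hsplit := Finset.card_filter_add_card_filter_not
      (s := (Finset.univ : Finset (Fin b))) (p := fun a => ext e a ∈ T)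
    have hbadle : (Finset.univ.filter (fun a : Fin b => ¬ ext e a ∈ T)).card ≤ 1 := by
      rw [Finset.card_le_one]
      intro a ha a' ha'
      simp only [Finset.mem_filter, Finset.mem_univ, true_and] at ha ha'
      obtain ⟨_, h1⟩ := bad_unique e he a ha
      obtain ⟨_, h2⟩ := bad_unique e he a' ha'
      rw [h1, h2]
    have huniv : (Finset.univ : Finset (Fin b)).card = b := by simp
    omega
  -- sum up
  have key : T.toFinset.card
      = ∑ e ∈ S.toFinset, (T.toFinset.filter (fun d => f d = e)).card :=
    Finset.card_eq_sum_card_fiberwise mapsTo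
  constructor
  · rw [hScard, hTcard, key]
    calc (b - 1) * S.toFinset.card = ∑ _e ∈ S.toFinset, (b - 1) := by
          rw [Finset.sum_const, smul_eq_mul, mul_comm]
      _ ≤ ∑ e ∈ S.toFinset, (T.toFinset.filter (fun d => f d = e)).card :=
          Finset.sum_le_sum fiber_ge
  · rw [hScard, hTcard, key]
    calc ∑ e ∈ S.toFinset, (T.toFinset.filter (fun d => f d = e)).card
        ≤ ∑ _e ∈ S.toFinset, b := Finset.sum_le_sum fiber_le
      _ = b * S.toFinset.card := by rw [Finset.sum_const, smul_eq_mul, mul_comm]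

end Paper
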